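/- arXiv:2505.20530 — 4 statements merged into one kernel-verified Lean document; each statement's English description precedes it below -/
import Mathlib

section
/- Let γ = Σ_{n≥1} 2^{−n!} be the Liouville constant in base 2, and let p_n/q_n = Σ_{k=1}^{n} 2^{−k!} with q_n = 2^{n!}. There is a constant c > 0 such that for every rational number p/q (in lowest terms, q ≥ 1) distinct from every p_n/q_n, one has |γ − p/q| ≥ c/q³. -/
open Polynomial NumberField IntermediateField
open scoped Classical

noncomputable section

/-- Cast of the rational partial sum to `ℝ`, reindexed over `range n`. -/
lemma aux_sn_real (n : ℕ) :
    ((∑ k ∈ Finset.Icc 1 n, (2 : ℚ)⁻¹ ^ Nat.factorial k : ℚ) : ℝ)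
      = ∑ i ∈ Finset.range n, 1 / (2 : ℝ) ^ Nat.factorial (i + 1) := by
  push_cast
  rw [← Finset.Ico_add_one_right_eq_Icc, Finset.sum_Ico_eq_sum_range, Nat.add_sub_cancel]
  refine Finset.sum_congr rfl fun i _ => ?_
  rw [add_comm 1 i, one_div, inv_pow]

/-- The Liouville series splits as partial sum plus remainder. -/
lemma aux_gamma_eq (n : ℕ) :
    (∑' i : ℕ, (2 : ℝ)⁻¹ ^ Nat.factorial (i + 1))
      = (∑ i ∈ Finset.range n, 1 / (2 : ℝ) ^ Nat.factorial (i + 1))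
        + LiouvilleNumber.remainder 2 n := by
  have hsum : Summable (fun i : ℕ => 1 / (2 : ℝ) ^ Nat.factorial (i + 1)) := by
    have h := LiouvilleNumber.summable (m := (2 : ℝ)) one_lt_two
    exact (summable_nat_add_iff (f := fun i : ℕ => 1 / (2 : ℝ) ^ Nat.factorial i) 1).2 h
  have hsplit := Summable.sum_add_tsum_nat_add
    (f := fun i : ℕ => 1 / (2 : ℝ) ^ Nat.factorial (i + 1)) n hsum
  have h1 : (∑' i : ℕ, (2 : ℝ)⁻¹ ^ Nat.factorial (i + 1))
      = ∑' i : ℕ, 1 / (2 : ℝ) ^ Nat.factorial (i + 1) := by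
    refine tsum_congr fun i => ?_
    rw [one_div, inv_pow]
  have h2 : (LiouvilleNumber.remainder 2 n)
      = ∑' i : ℕ, 1 / (2 : ℝ) ^ Nat.factorial (i + n + 1) := by
    refine tsum_congr fun i => ?_
    rw [add_assoc]
  rw [h1, h2, ← hsplit]

/-- Gap between a rational `x` distinct from the partial sum and the partial sum. -/
lemma aux_rat_gap (n : ℕ) (x : ℚ)
    (hx : x ≠ ∑ k ∈ Finset.Icc 1 n, (2 : ℚ)⁻¹ ^ Nat.factorial k) :
    1 / ((x.den : ℚ) * 2 ^ Nat.factorial n)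
      ≤ |x - ∑ k ∈ Finset.Icc 1 n, (2 : ℚ)⁻¹ ^ Nat.factorial k| := by
  set s : ℚ := ∑ k ∈ Finset.Icc 1 n, (2 : ℚ)⁻¹ ^ Nat.factorial k with hs
  have hsQ : s * 2 ^ Nat.factorial n
      = ((∑ k ∈ Finset.Icc 1 n, 2 ^ (Nat.factorial n - Nat.factorial k) : ℤ) : ℚ) := by
    push_cast
    rw [hs, Finset.sum_mul]
    refine Finset.sum_congr rfl fun k hk => ?_
    have hkn : Nat.factorial k ≤ Nat.factorial n :=
      Nat.factorial_le (Finset.mem_Icc.mp hk).2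
    rw [inv_pow, inv_mul_eq_div, div_eq_iff (pow_ne_zero _ (two_ne_zero (α := ℚ))),
      ← pow_add, Nat.sub_add_cancel hkn]
  set N : ℤ := x.num * 2 ^ Nat.factorial n
    - (∑ k ∈ Finset.Icc 1 n, 2 ^ (Nat.factorial n - Nat.factorial k) : ℤ) * x.den with hN
  have hdQ : (0 : ℚ) < (x.den : ℚ) * 2 ^ Nat.factorial n := by positivity
  have key : (x - s) * ((x.den : ℚ) * 2 ^ Nat.factorial n) = (N : ℚ) := by
    have hxd : x * (x.den : ℚ) = (x.num : ℚ) := Rat.mul_den_eq_num x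
    push_cast [hN]
    calc (x - s) * ((x.den : ℚ) * 2 ^ Nat.factorial n)
        = (x * (x.den : ℚ)) * 2 ^ Nat.factorial n
          - (s * 2 ^ Nat.factorial n) * (x.den : ℚ) := by ring
      _ = (x.num : ℚ) * 2 ^ Nat.factorial n
          - ((∑ k ∈ Finset.Icc 1 n, 2 ^ (Nat.factorial n - Nat.factorial k) : ℤ) : ℚ)
            * (x.den : ℚ) := by rw [hxd, hsQ]
      _ = _ := by push_cast; ring
  have hN0 : N ≠ 0 := by
    intro h0
    apply hx
    have : (x - s) * ((x.den : ℚ) * 2 ^ Nat.factorial n) = 0 := by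
      rw [key, h0, Int.cast_zero]
    rcases mul_eq_zero.mp this with h | h
    · exact sub_eq_zero.mp h
    · exact absurd h hdQ.ne'
  have h1N : (1 : ℚ) ≤ |(N : ℚ)| := by
    have : (1 : ℤ) ≤ |N| := Int.one_le_abs hN0
    calc (1 : ℚ) = ((1 : ℤ) : ℚ) := by norm_num
      _ ≤ ((|N| : ℤ) : ℚ) := by exact_mod_cast this
      _ = |(N : ℚ)| := by push_cast; ring
  rw [div_le_iff₀ hdQ]
  calc (1 : ℚ) ≤ |(N : ℚ)| := h1N
    _ = |(x - s) * ((x.den : ℚ) * 2 ^ Nat.factorial n)| := by rw [key]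
    _ = |x - s| * ((x.den : ℚ) * 2 ^ Nat.factorial n) := by
        rw [abs_mul, abs_of_pos hdQ]

/-- Lower bound for rational approximations to the Liouville constant
`γ = Σ 2^{-n!}` by rationals other than the partial sums: `|γ - p/q| ≥ c/q³`. -/
theorem liouville_constant_lower_bound :
    ∃ c > (0 : ℝ), ∀ x : ℚ,
      (∀ n : ℕ, 1 ≤ n → x ≠ ∑ k ∈ Finset.Icc 1 n, (2 : ℚ)⁻¹ ^ Nat.factorial k) →
      |(∑' n : ℕ, (2 : ℝ)⁻¹ ^ Nat.factorial (n + 1)) - (x : ℝ)| ≥ c / (x.den : ℝ) ^ 3 := by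
  refine ⟨1 / 32, by norm_num, fun x hx => ?_⟩
  set q : ℕ := x.den with hq
  have hq1 : 1 ≤ q := x.den_pos
  -- choose n minimal (≥ 2) with 4q ≤ 2^(n! * n)
  have hex : ∃ k : ℕ, 4 * q ≤ 2 ^ (Nat.factorial (k + 2) * (k + 2)) := by
    refine ⟨4 * q, ?_⟩
    have h1 : 4 * q < 2 ^ (4 * q) := Nat.lt_two_pow_self
    have h2 : 4 * q ≤ Nat.factorial (4 * q + 2) * (4 * q + 2) := by
      calc 4 * q ≤ 4 * q + 2 := by omega
        _ ≤ Nat.factorial (4 * q + 2) := Nat.self_le_factorial _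
        _ ≤ Nat.factorial (4 * q + 2) * (4 * q + 2) := Nat.le_mul_of_pos_right _ (by omega)
    exact le_trans h1.le (Nat.pow_le_pow_right (by norm_num) h2)
  set n : ℕ := Nat.find hex + 2 with hn
  have hn2 : 2 ≤ n := by omega
  have hbig : 4 * q ≤ 2 ^ (Nat.factorial n * n) := Nat.find_spec hex
  have hQsmall : 2 ^ Nat.factorial n ≤ 16 * q ^ 2 := by
    rcases Nat.eq_zero_or_pos (Nat.find hex) with h0 | hpos
    · have : n = 2 := by omega
      rw [this]
      have : (2 : ℕ) ^ Nat.factorial 2 = 4 := by decide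
      rw [this]
      nlinarith
    · obtain ⟨j, hj⟩ := Nat.exists_eq_succ_of_ne_zero hpos.ne'
      have hmin := Nat.find_min hex (m := j) (by omega)
      push_neg at hmin
      have hnj : n = j + 3 := by omega
      have hfact : Nat.factorial n ≤ Nat.factorial (j + 2) * (j + 2) * 2 := by
        rw [hnj]
        have : Nat.factorial (j + 3) = Nat.factorial (j + 2) * (j + 3) := by
          rw [mul_comm]; rfl
        rw [this]
        have : j + 3 ≤ (j + 2) * 2 := by omega
        calc Nat.factorial (j + 2) * (j + 3)
            ≤ Nat.factorial (j + 2) * ((j + 2) * 2) := Nat.mul_le_mul_left _ this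
          _ = Nat.factorial (j + 2) * (j + 2) * 2 := by ring
      calc 2 ^ Nat.factorial n ≤ 2 ^ (Nat.factorial (j + 2) * (j + 2) * 2) :=
            Nat.pow_le_pow_right (by norm_num) hfact
        _ = (2 ^ (Nat.factorial (j + 2) * (j + 2))) ^ 2 := by rw [← pow_mul]
        _ ≤ (4 * q) ^ 2 := Nat.pow_le_pow_left hmin.le 2
        _ = 16 * q ^ 2 := by ring
  -- real abbreviations
  set γ : ℝ := ∑' i : ℕ, (2 : ℝ)⁻¹ ^ Nat.factorial (i + 1) with hγ
  set s : ℚ := ∑ k ∈ Finset.Icc 1 n, (2 : ℚ)⁻¹ ^ Nat.factorial k with hsdef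
  have hqr : (0 : ℝ) < (q : ℝ) := by exact_mod_cast hq1
  have hQr : (0 : ℝ) < (2 : ℝ) ^ Nat.factorial n := by positivity
  -- gap bound
  have hgap : 1 / ((q : ℝ) * 2 ^ Nat.factorial n) ≤ |(x : ℝ) - (s : ℝ)| := by
    have := aux_rat_gap n x (hx n (by omega))
    have hcast : ((1 / ((x.den : ℚ) * 2 ^ Nat.factorial n) : ℚ) : ℝ)
        ≤ ((|x - s| : ℚ) : ℝ) := by exact_mod_cast this
    push_cast at hcast
    convert hcast using 2
  -- remainder bound
  have hrem_eq : γ - (s : ℝ) = LiouvilleNumber.remainder 2 n := by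
    rw [hγ, aux_gamma_eq n, hsdef, aux_sn_real n]; ring
  have hrem_pos : 0 < LiouvilleNumber.remainder 2 n :=
    LiouvilleNumber.remainder_pos one_lt_two n
  have hrem_lt : LiouvilleNumber.remainder 2 n < 2 / 2 ^ Nat.factorial (n + 1) := by
    have h := LiouvilleNumber.remainder_lt' n (m := (2 : ℝ)) one_lt_two
    have : ((1 : ℝ) - 1 / 2)⁻¹ * (1 / 2 ^ Nat.factorial (n + 1))
        = 2 / 2 ^ Nat.factorial (n + 1) := by rw [div_eq_mul_inv 2, one_div]; norm_num
    rwa [this] at h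
  -- 2 / 2^(n+1)! ≤ 1 / (2 q Q)
  have hexp : ((2 : ℝ)) ^ Nat.factorial (n + 1)
      = 2 ^ Nat.factorial n * 2 ^ (Nat.factorial n * n) := by
    rw [← pow_add]
    congr 1
    have : Nat.factorial (n + 1) = Nat.factorial n * (n + 1) := by rw [mul_comm]; rfl
    rw [this]; ring
  have hbigr : (4 : ℝ) * (q : ℝ) ≤ 2 ^ (Nat.factorial n * n) := by exact_mod_cast hbig
  have htail : 2 / (2 : ℝ) ^ Nat.factorial (n + 1)
      ≤ 1 / (2 * ((q : ℝ) * 2 ^ Nat.factorial n)) := by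
    rw [hexp]
    rw [div_le_div_iff₀ (by positivity) (by positivity)]
    have : (2 : ℝ) ^ (Nat.factorial n * n) ≥ 4 * q := hbigr
    nlinarith [hQr.le, hqr.le]
  -- triangle inequality
  have htri : |(x : ℝ) - (s : ℝ)| ≤ |γ - (x : ℝ)| + (γ - (s : ℝ)) := by
    have : |(x : ℝ) - (s : ℝ)| ≤ |(x : ℝ) - γ| + |γ - (s : ℝ)| := abs_sub_le _ _ _
    rw [abs_sub_comm (x : ℝ) γ] at this
    have hpos2 : 0 < γ - (s : ℝ) := by rw [hrem_eq]; exact hrem_pos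
    rwa [abs_of_pos hpos2] at this
  have hQsr : ((2 : ℝ)) ^ Nat.factorial n ≤ 16 * (q : ℝ) ^ 2 := by exact_mod_cast hQsmall
  have hmain : 1 / (2 * ((q : ℝ) * 2 ^ Nat.factorial n)) ≤ |γ - (x : ℝ)| := by
    have h1 : |γ - (x : ℝ)| ≥ |(x : ℝ) - (s : ℝ)| - (γ - (s : ℝ)) := by linarith
    have h2 : γ - (s : ℝ) < 1 / (2 * ((q : ℝ) * 2 ^ Nat.factorial n)) := by
      rw [hrem_eq]; exact lt_of_lt_of_le hrem_lt htail
    have h3 : 1 / ((q : ℝ) * 2 ^ Nat.factorial n)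
        = 1 / (2 * ((q : ℝ) * 2 ^ Nat.factorial n)) + 1 / (2 * ((q : ℝ) * 2 ^ Nat.factorial n)) := by
      field_simp; ring
    linarith [hgap]
  have hfinal : (1 / 32 : ℝ) / (q : ℝ) ^ 3 ≤ 1 / (2 * ((q : ℝ) * 2 ^ Nat.factorial n)) := by
    rw [div_le_div_iff₀ (by positivity) (by positivity)]
    nlinarith [hqr.le, hQr.le]
  exact le_trans hfinal hmain

end
end

section
/- Let K be a field of characteristic 0, α ∈ K, and m a positive integer. Suppose α^{1/m} (a fixed m-th root of α in an algebraic closure) has degree m over K, and suppose every root of unity contained in K(α^{1/m}) already lies in K. Then every intermediate field L with K ⊆ L ⊆ K(α^{1/m}) is of the form K(α^{1/d}) for some divisor d of m, where α^{1/d} := (α^{1/m})^{m/d}. -/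
open Polynomial NumberField IntermediateField
open scoped Classical

noncomputable section

/-- Intermediate fields of a radical extension `K(α^{1/m})/K` containing no new
roots of unity are of the form `K(α^{1/d})` for `d ∣ m`. -/
theorem intermediate_fields_of_radical {K : Type*} [Field K] [CharZero K]
    (a : K) (m : ℕ) (hm : 0 < m) (r : AlgebraicClosure K)
    (hr : r ^ m = algebraMap K (AlgebraicClosure K) a)
    (hdeg : Module.finrank K (IntermediateField.adjoin K ({r} : Set (AlgebraicClosure K))) = m)
    (hroots : ∀ ζ : AlgebraicClosure K, (∃ k : ℕ, 0 < k ∧ ζ ^ k = 1) →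
      ζ ∈ IntermediateField.adjoin K ({r} : Set (AlgebraicClosure K)) →
      ζ ∈ (algebraMap K (AlgebraicClosure K)).range)
    (L : IntermediateField K (AlgebraicClosure K))
    (hL : L ≤ IntermediateField.adjoin K ({r} : Set (AlgebraicClosure K))) :
    ∃ d : ℕ, d ∣ m ∧
      L = IntermediateField.adjoin K ({r ^ (m / d)} : Set (AlgebraicClosure K)) := by
  set E := IntermediateField.adjoin K ({r} : Set (AlgebraicClosure K)) with hE
  by_cases hr0 : r = 0
  · refine ⟨1, one_dvd m, ?_⟩
    have hEbot : E = ⊥ := by rw [hE, hr0]; exact IntermediateField.adjoin_zero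
    have hLbot : L = ⊥ := le_antisymm (le_trans hL hEbot.le) bot_le
    rw [hLbot, show r ^ (m / 1) = 0 by simp [hr0, hm.ne']]
    exact IntermediateField.adjoin_zero.symm
  have hrE : r ∈ E := IntermediateField.mem_adjoin_simple_self K r
  have hint : IsIntegral K r := (Algebra.IsAlgebraic.isAlgebraic r).isIntegral
  have hintL : IsIntegral (↥L) r := hint.tower_top
  set p := minpoly (↥L) r with hp
  set e := p.natDegree with he
  have he0 : 0 < e := minpoly.natDegree_pos hintL
  have hpq : p ∣ (X ^ m - C (algebraMap K (↥L) a)) := by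
    apply minpoly.dvd
    simp only [map_sub, map_pow, aeval_X, aeval_C, ← IsScalarTower.algebraMap_apply, ← hr,
      sub_self]
  set pm := p.map (algebraMap (↥L) (AlgebraicClosure K)) with hpm
  have hmonic : p.Monic := minpoly.monic hintL
  have hpm_monic : pm.Monic := hmonic.map _
  have hsplit : pm.Splits := IsAlgClosed.splits pm
  have hcard : Multiset.card pm.roots = e := by
    rw [(splits_iff_card_roots).mp hsplit, hpm, hmonic.natDegree_map]
  have hroot : ∀ s ∈ pm.roots, s ^ m = r ^ m := by
    intro s hs
    have h1 : aeval s p = 0 := by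
      have := isRoot_of_mem_roots hs
      rwa [Polynomial.IsRoot, eval_map, ← aeval_def] at this
    obtain ⟨c, hc⟩ := hpq
    have h2 : aeval s (X ^ m - C (algebraMap K (↥L) a)) = 0 := by
      rw [hc, map_mul, h1, zero_mul]
    simp only [map_sub, map_pow, aeval_X, aeval_C, ← IsScalarTower.algebraMap_apply,
      sub_eq_zero] at h2
    rw [h2, hr]
  -- the product of the roots
  set P := pm.roots.prod with hP
  have hc0 : pm.coeff 0 = (-1) ^ pm.natDegree * P :=
    hsplit.coeff_zero_eq_prod_roots_of_monic hpm_monic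
  have hePm : pm.natDegree = e := hmonic.natDegree_map _
  have hPL : P ∈ L := by
    have : P = (-1) ^ e * pm.coeff 0 := by
      rw [hc0, hePm, ← mul_assoc, ← mul_pow]
      simp
    rw [this, hpm, coeff_map]
    exact mul_mem (pow_mem (neg_mem (one_mem L)) e) (p.coeff 0).2
  have hPpow : P ^ m = (r ^ e) ^ m := by
    have h1 : P ^ m = (pm.roots.map (fun s => s ^ m)).prod := by
      rw [Multiset.prod_map_pow]
      simp [hP]
    have h2 : pm.roots.map (fun s => s ^ m) = Multiset.replicate e (r ^ m) := by
      rw [Multiset.eq_replicate]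
      constructor
      · rw [Multiset.card_map, hcard]
      · intro b hb
        obtain ⟨s, hs, rfl⟩ := Multiset.mem_map.mp hb
        exact hroot s hs
    rw [h1, h2, Multiset.prod_replicate, ← pow_mul, ← pow_mul, mul_comm]
  have hre0 : r ^ e ≠ 0 := pow_ne_zero _ hr0
  set ζ := P / r ^ e with hζ
  have hζm : ζ ^ m = 1 := by
    rw [hζ, div_pow, hPpow, div_self (pow_ne_zero _ hre0)]
  have hζE : ζ ∈ E := div_mem (hL hPL) (pow_mem hrE e)
  obtain ⟨c, hc⟩ := hroots ζ ⟨m, hm, hζm⟩ hζE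
  have hζ0 : ζ ≠ 0 := fun h => by simp [h, zero_pow hm.ne'] at hζm
  have hteL : r ^ e ∈ L := by
    have hP0 : P ≠ 0 := by intro h; exact hζ0 (by rw [hζ, h, zero_div])
    have : r ^ e = P * ζ⁻¹ := by
      field_simp [hζ, hP0]
      rw [hζ, mul_div_cancel₀ _ hre0]
    rw [this]
    exact mul_mem hPL (inv_mem (hc ▸ L.algebraMap_mem c))
  -- degree bookkeeping
  have hLE : relfinrank L E = e := by
    rw [relfinrank_eq_finrank_of_le hL, extendScalars_adjoin hL]
    exact adjoin.finrank hintL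
  have hedvd : e ∣ m := by
    have := relfinrank_dvd_finrank_bot L E
    rwa [hLE, hdeg] at this
  refine ⟨m / e, Nat.div_dvd_of_dvd hedvd, ?_⟩
  rw [Nat.div_div_self hedvd hm.ne']
  set M := IntermediateField.adjoin K ({r ^ e} : Set (AlgebraicClosure K)) with hM
  have hME : M ≤ E := by
    rw [hM, hE, adjoin_le_iff]
    simpa using pow_mem hrE e
  have hML : M ≤ L := by
    rw [hM, adjoin_le_iff]
    simpa using hteL
  have hMint : IsIntegral (↥M) r := hint.tower_top
  have hteM : r ^ e ∈ M := IntermediateField.mem_adjoin_simple_self K _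
  have hMErel : relfinrank M E = (minpoly (↥M) r).natDegree := by
    rw [relfinrank_eq_finrank_of_le hME, extendScalars_adjoin hME]
    exact adjoin.finrank hMint
  have hMEle : relfinrank M E ≤ e := by
    rw [hMErel]
    have hdvd : minpoly (↥M) r ∣ (X ^ e - C (⟨r ^ e, hteM⟩ : ↥M)) := by
      apply minpoly.dvd
      simp [IntermediateField.algebraMap_apply]
    calc (minpoly (↥M) r).natDegree ≤ (X ^ e - C (⟨r ^ e, hteM⟩ : ↥M)).natDegree :=
          natDegree_le_of_dvd hdvd ((monic_X_pow_sub_C _ he0.ne').ne_zero)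
      _ = e := natDegree_X_pow_sub_C
  have hMEpos : 0 < relfinrank M E := by
    rw [hMErel]; exact minpoly.natDegree_pos hMint
  have htower : relfinrank M L * relfinrank L E = relfinrank M E :=
    relfinrank_mul_relfinrank hML hL
  have hML1 : relfinrank M L = 1 := by
    rw [hLE] at htower
    rcases Nat.eq_zero_or_pos (relfinrank M L) with h | h
    · rw [h, zero_mul] at htower; omega
    · have : relfinrank M L * e ≤ 1 * e := by rw [htower, one_mul]; exact hMEle
      have := Nat.le_of_mul_le_mul_right this he0
      omega
  have hfinE : FiniteDimensional K E := adjoin.finiteDimensional hint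
  have hfinL : FiniteDimensional K (↥L) := by
    have h1 : FiniteDimensional K E.toSubmodule := hfinE
    have : L.toSubmodule ≤ E.toSubmodule := hL
    exact Submodule.finiteDimensional_of_le this
  have hfr : Module.finrank K (↥M) = Module.finrank K (↥L) := by
    have := finrank_bot_mul_relfinrank hML
    rw [hML1, mul_one] at this
    exact this
  exact (eq_of_le_of_finrank_eq hML hfr).symm

end
end

section
/- Let m ≥ 1 and let α be a positive rational number with 0 < α < 1 that is not a p-th power in ℚ for any prime p dividing m. Fix a real m-th root α^{1/m}. Then the algebraic number β = Σ_{k=1}^{m-1} (α^{1/m})^{k!} has degree exactly m over ℚ. -/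
open Polynomial NumberField IntermediateField
open scoped Classical

noncomputable section

namespace DegreeSumRadicalFactorialsAux

open Polynomial IntermediateField

theorem aux_minpoly_eq (k : ℕ) (hk : 1 ≤ k) (a : ℚ) (y : ℝ) (hy : y ^ k = (a : ℝ))
    (hdeg : (minpoly ℚ y).natDegree = k) : minpoly ℚ y = X ^ k - C a := by
  have hyint : IsIntegral ℚ y :=
    ⟨X ^ k - C a, monic_X_pow_sub_C a (by omega), by simp [hy]⟩
  have hne : (X ^ k - C a : ℚ[X]) ≠ 0 := (monic_X_pow_sub_C a (show k ≠ 0 by omega)).ne_zero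
  have hdvd : minpoly ℚ y ∣ X ^ k - C a := minpoly.dvd ℚ y (by simp [hy])
  refine eq_of_monic_of_associated (minpoly.monic hyint) (monic_X_pow_sub_C a (by omega)) ?_
  refine associated_of_dvd_of_natDegree_le hdvd hne ?_
  rw [hdeg, natDegree_X_pow_sub_C]

theorem aux_deg : ∀ n : ℕ, 1 ≤ n → ∀ a : ℚ, 0 < a →
    (∀ p : ℕ, p.Prime → p ∣ n → ∀ b : ℚ, b ^ p ≠ a) →
    ∀ x : ℝ, x ^ n = (a : ℝ) → (minpoly ℚ x).natDegree = n := by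
  intro n
  induction n using induction_on_primes with
  | zero => intro h; omega
  | one =>
    intro _ a _ _ x hx
    rw [pow_one] at hx
    subst hx
    rw [show ((a : ℝ)) = algebraMap ℚ ℝ a from rfl, minpoly.eq_X_sub_C, natDegree_X_sub_C]
  | prime_mul p k hp IH =>
    intro hn a ha hpow x hx
    have hk : 1 ≤ k := by
      rcases Nat.eq_zero_or_pos k with rfl | h; · simp at hn
      · exact h
    set y : ℝ := x ^ p with hy_def
    have hy : y ^ k = (a : ℝ) := by rw [hy_def, ← pow_mul, hx]
    have hydeg : (minpoly ℚ y).natDegree = k :=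
      IH hk a ha (fun q hq hqk b hb => hpow q hq (hqk.mul_left p) b hb) y hy
    have hyint : IsIntegral ℚ y :=
      ⟨X ^ k - C a, monic_X_pow_sub_C a (by omega), by simp [hy]⟩
    have hminy : minpoly ℚ y = X ^ k - C a := aux_minpoly_eq k hk a y hy hydeg
    -- the intermediate field K = ℚ(y)
    set K : IntermediateField ℚ ℝ := ℚ⟮y⟯ with hK
    have hfinK : Module.finrank ℚ K = k := by
      rw [hK, adjoin.finrank hyint, hydeg]
    -- norm of the generator
    have hnormgen : Algebra.norm ℚ (AdjoinSimple.gen ℚ y) = (-1) ^ k * (-a) := by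
      rw [← adjoin.powerBasis_gen hyint]
      erw [Algebra.PowerBasis.norm_gen_eq_coeff_zero_minpoly]
      have hdim : (adjoin.powerBasis hyint).dim = k := by
        simp [adjoin.powerBasis, hydeg]
      rw [hdim, adjoin.powerBasis_gen]
      erw [minpoly_gen]
      rw [hminy]
      simp only [coeff_sub, coeff_X_pow, coeff_C_zero]
      rw [if_neg (by omega)]
      ring
    -- irreducibility of X^p - C (gen) over K
    have hirr : Irreducible (X ^ p - C (AdjoinSimple.gen ℚ y)) := by
      apply X_pow_sub_C_irreducible_of_prime hp
      intro b hb
      have hN : (Algebra.norm ℚ b) ^ p = (-1) ^ k * (-a) := by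
        rw [← map_pow, hb, hnormgen]
      rcases Nat.even_or_odd k with hke | hko
      · -- k even: norm^p = -a
        rw [hke.neg_one_pow, one_mul] at hN
        rcases hp.eq_two_or_odd' with rfl | hpo
        · have : (0:ℚ) ≤ (Algebra.norm ℚ b) ^ 2 := sq_nonneg _
          rw [hN] at this; linarith
        · exact hpow p hp (dvd_mul_right p k) (-(Algebra.norm ℚ b))
            (by rw [hpo.neg_pow, hN]; ring)
      · -- k odd: norm^p = a
        rw [hko.neg_one_pow] at hN
        exact hpow p hp (dvd_mul_right p k) (Algebra.norm ℚ b) (by rw [hN]; ring)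
    -- x has degree p over K
    have hxK : (X ^ p - C (AdjoinSimple.gen ℚ y) : K[X]).Monic :=
      monic_X_pow_sub_C _ hp.ne_zero
    have haev : (Polynomial.aeval x) (X ^ p - C (AdjoinSimple.gen ℚ y) : K[X]) = 0 := by
      have : (algebraMap K ℝ) (AdjoinSimple.gen ℚ y) = y := rfl
      simp [this]
      exact sub_self _
    have hminx : minpoly K x = X ^ p - C (AdjoinSimple.gen ℚ y) :=
      (minpoly.eq_of_irreducible_of_monic hirr haev hxK).symm
    have hxintK : IsIntegral K x := ⟨_, hxK, haev⟩
    have hfinKx : Module.finrank K K⟮x⟯ = p := by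
      rw [adjoin.finrank hxintK, hminx, natDegree_X_pow_sub_C]
    -- restrict scalars
    have hres : IntermediateField.restrictScalars ℚ (K⟮x⟯) = ℚ⟮x⟯ := by
      refine (restrictScalars_adjoin_eq_sup ℚ K {x}).trans ?_
      refine sup_eq_right.mpr ?_
      rw [hK, adjoin_simple_le_iff, hy_def]
      exact pow_mem (mem_adjoin_simple_self ℚ x) p
    have hxint : IsIntegral ℚ x :=
      ⟨X ^ (p * k) - C a, monic_X_pow_sub_C a (by positivity), by simp [hx]⟩
    have hfd1 : FiniteDimensional ℚ K := adjoin.finiteDimensional hyint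
    have hfd2 : FiniteDimensional K K⟮x⟯ := adjoin.finiteDimensional hxintK
    have htower : Module.finrank ℚ K * Module.finrank K K⟮x⟯
        = Module.finrank ℚ (IntermediateField.restrictScalars ℚ (K⟮x⟯)) :=
      Module.finrank_mul_finrank ℚ K K⟮x⟯
    have hfin : Module.finrank ℚ ℚ⟮x⟯ = p * k := by
      rw [← hres, ← htower, hfinK, hfinKx, mul_comm]
    exact (adjoin.finrank hxint).symm.trans hfin


theorem aux_pow_mem (m : ℕ) (hm : 1 ≤ m) (α : ℚ) (h0 : 0 < α)
    (r : ℝ) (hr : r ^ m = (α : ℝ)) (K : IntermediateField ℚ ℝ)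
    (hint : IsIntegral K r) :
    r ^ (minpoly K r).natDegree ∈ K := by
  set g := minpoly K r with hg
  set d := g.natDegree with hd
  have hd1 : 0 < d := minpoly.natDegree_pos hint
  have haK : (algebraMap K ℝ) (algebraMap ℚ K α) = (α : ℝ) := by
    rw [← IsScalarTower.algebraMap_apply, eq_ratCast]
  have hdvd : g ∣ (X ^ m - C (algebraMap ℚ K α)) :=
    minpoly.dvd K r (by simp [haK, hr])
  set φ : K →+* ℂ := Complex.ofRealHom.comp (algebraMap K ℝ) with hφ
  set gφ : ℂ[X] := g.map φ with hgφ
  have hgmonic : g.Monic := minpoly.monic hint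
  have hgφmonic : gφ.Monic := hgmonic.map φ
  have hndφ : gφ.natDegree = d := hgmonic.natDegree_map φ
  have hsp : gφ.Splits :=
    IsAlgClosed.splits gφ
  have hcard : gφ.roots.card = d := (splits_iff_card_roots.mp hsp).trans hndφ
  have hdvdφ : gφ ∣ (X ^ m - C (((α : ℝ) : ℂ))) := by
    have := Polynomial.map_dvd φ hdvd
    rwa [Polynomial.map_sub, Polynomial.map_pow, map_X, map_C,
      show φ (algebraMap ℚ K α) = ((α : ℝ) : ℂ) by
        rw [hφ]; simp [haK]] at this
  have hroots : ∀ z ∈ gφ.roots, z ^ m = ((α : ℝ) : ℂ) := by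
    intro z hz
    have hz0 : gφ.eval z = 0 := isRoot_of_mem_roots hz
    have := Polynomial.eval_eq_zero_of_dvd_of_eval_eq_zero hdvdφ hz0
    simpa [sub_eq_zero] using this
  set w : ℂ := gφ.roots.prod with hw
  have hcoeff : gφ.coeff 0 = (-1) ^ d * w :=
    (hsp.coeff_zero_eq_prod_roots_of_monic hgφmonic).trans (by rw [hndφ])
  have hwval : w = (-1) ^ d * φ (g.coeff 0) := by
    have : φ (g.coeff 0) = gφ.coeff 0 := (coeff_map φ 0).symm
    rw [this, hcoeff, ← mul_assoc, ← pow_add]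
    rw [show d + d = 2 * d by ring, pow_mul]
    norm_num
  have hwm : w ^ m = ((α : ℝ) : ℂ) ^ d := by
    have h1 : (gφ.roots.map (fun z => z ^ m)).prod = w ^ m := by
      have := Multiset.prod_map_pow (m := gφ.roots) (f := fun z : ℂ => z) (n := m)
      simpa using this
    have h2 : gφ.roots.map (fun z => z ^ m) = Multiset.replicate d ((α : ℝ) : ℂ) := by
      apply Multiset.eq_replicate.mpr
      constructor
      · rw [Multiset.card_map, hcard]
      · intro b hb
        obtain ⟨z, hz, rfl⟩ := Multiset.mem_map.mp hb
        exact hroots z hz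
    rw [← h1, h2, Multiset.prod_replicate]
  set t : ℝ := (-1) ^ d * (algebraMap K ℝ (g.coeff 0)) with ht
  have htw : ((t : ℝ) : ℂ) = w := by
    rw [ht, hwval, hφ]
    push_cast
    rfl
  have htm : t ^ m = (α : ℝ) ^ d := by
    have : ((t ^ m : ℝ) : ℂ) = (((α : ℝ) ^ d : ℝ) : ℂ) := by
      push_cast
      rw [htw, hwm]
      push_cast
      ring
    exact_mod_cast this
  have hrdm : (r ^ d) ^ m = (α : ℝ) ^ d := by
    rw [← pow_mul, mul_comm d m, pow_mul, hr]
  have habs : |t| = |r ^ d| := by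
    have h1 : |t| ^ m = |r ^ d| ^ m := by
      rw [← abs_pow, ← abs_pow, htm, hrdm]
    exact (pow_left_strictMonoOn₀ (show m ≠ 0 by omega)).injOn
      (Set.mem_setOf.mpr (abs_nonneg t)) (Set.mem_setOf.mpr (abs_nonneg _)) h1
  have hcases : t = r ^ d ∨ t = -(r ^ d) := abs_eq_abs.mp habs
  have htK : ∃ u : K, (algebraMap K ℝ) u = t := by
    refine ⟨(-1) ^ d * g.coeff 0, ?_⟩
    rw [map_mul, map_pow, map_neg, map_one, ht]
  obtain ⟨u, hu⟩ := htK
  rcases hcases with h | h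
  · rw [← h, ← hu]; exact SetLike.coe_mem u
  · have : r ^ d = -t := by linarith [h]
    rw [this, ← hu]
    exact neg_mem (SetLike.coe_mem u)


end DegreeSumRadicalFactorialsAux

open DegreeSumRadicalFactorialsAux

/-- If `0 < α < 1` is rational and not a `p`-th power for any prime `p ∣ m`,
and `r` is a real `m`-th root of `α`, then `β = Σ_{k=1}^{m-1} r^{k!}` has degree
exactly `m` over `ℚ`. -/
theorem degree_sum_radical_factorials (m : ℕ) (hm : 1 ≤ m) (α : ℚ)
    (h0 : 0 < α) (h1 : α < 1)
    (hpow : ∀ p : ℕ, p.Prime → p ∣ m → ¬∃ b : ℚ, b ^ p = α)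
    (r : ℝ) (hr : r ^ m = (α : ℝ)) :
    (minpoly ℚ (∑ k ∈ Finset.Icc 1 (m - 1), r ^ Nat.factorial k)).natDegree = m := by
  rcases eq_or_lt_of_le hm with h1m | hm2'
  · -- m = 1
    rw [← h1m]
    rw [show (1:ℕ) - 1 = 0 from rfl, Finset.Icc_eq_empty (by omega), Finset.sum_empty,
      minpoly.zero, natDegree_X]
  have hm2 : 2 ≤ m := hm2'
  set β : ℝ := ∑ k ∈ Finset.Icc 1 (m - 1), r ^ Nat.factorial k with hβdef
  have hpow' : ∀ p : ℕ, p.Prime → p ∣ m → ∀ b : ℚ, b ^ p ≠ α :=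
    fun p hp hpm b hb => hpow p hp hpm ⟨b, hb⟩
  have hdeg_r : (minpoly ℚ r).natDegree = m := aux_deg m hm α h0 hpow' r hr
  have hrint : IsIntegral ℚ r :=
    ⟨X ^ m - C α, monic_X_pow_sub_C α (by omega), by simp [hr]⟩
  have hβmem : β ∈ ℚ⟮r⟯ :=
    sum_mem (fun k _ => pow_mem (mem_adjoin_simple_self ℚ r) _)
  have hfdr : FiniteDimensional ℚ ℚ⟮r⟯ := adjoin.finiteDimensional hrint
  have hβint : IsIntegral ℚ β := by
    have h := IsIntegral.of_finite ℚ (⟨β, hβmem⟩ : ℚ⟮r⟯)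
    have h2 := h.algebraMap (B := ℝ)
    simpa using h2
  set K : IntermediateField ℚ ℝ := ℚ⟮β⟯ with hKdef
  have hKle : K ≤ ℚ⟮r⟯ := adjoin_simple_le_iff.mpr hβmem
  have hintKr : IsIntegral K r := hrint.tower_top
  set d : ℕ := (minpoly K r).natDegree with hddef
  have hd1 : 0 < d := minpoly.natDegree_pos hintKr
  have hrdK : r ^ d ∈ K := aux_pow_mem m hm α h0 r hr K hintKr
  have hfdK : FiniteDimensional ℚ K := adjoin.finiteDimensional hβint
  have hfdKr : FiniteDimensional K K⟮r⟯ := adjoin.finiteDimensional hintKr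
  have hres : IntermediateField.restrictScalars ℚ (K⟮r⟯) = ℚ⟮r⟯ := by
    refine (restrictScalars_adjoin_eq_sup ℚ K {r}).trans ?_
    exact sup_eq_right.mpr hKle
  set e : ℕ := Module.finrank ℚ K with hedef
  have hm_ed : e * d = m := by
    have htower : Module.finrank ℚ K * Module.finrank K K⟮r⟯
        = Module.finrank ℚ (IntermediateField.restrictScalars ℚ (K⟮r⟯)) :=
      Module.finrank_mul_finrank ℚ K K⟮r⟯
    rw [hres] at htower
    have h4 : Module.finrank K K⟮r⟯ = d := (adjoin.finrank hintKr).symm.symm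
    have h5 : Module.finrank ℚ ℚ⟮r⟯ = m := (adjoin.finrank hrint).trans hdeg_r
    rw [h4, h5] at htower
    exact htower
  have he1 : 1 ≤ e := Module.finrank_pos
  have hrd_pow : (r ^ d) ^ e = (α : ℝ) := by
    rw [← pow_mul, mul_comm d e, hm_ed, hr]
  have hedvd : e ∣ m := ⟨d, hm_ed.symm⟩
  have hdeg_rd : (minpoly ℚ (r ^ d)).natDegree = e :=
    aux_deg e he1 α h0 (fun p hp hpe b hb => hpow' p hp (hpe.trans hedvd) b hb) _ hrd_pow
  have hKeq : ℚ⟮r ^ d⟯ = K := by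
    refine IntermediateField.eq_of_le_of_finrank_le (adjoin_simple_le_iff.mpr hrdK) ?_
    rw [adjoin.finrank (hrint.pow d), hdeg_rd, hedef]
  have hβ_in : β ∈ ℚ⟮r ^ d⟯ := hKeq ▸ mem_adjoin_simple_self ℚ β
  obtain ⟨q, hq⟩ : ∃ q : ℚ[X], (Polynomial.aeval (r ^ d)) q = β := by
    have h1 : β ∈ Algebra.adjoin ℚ {r ^ d} := by
      rw [← adjoin_simple_toSubalgebra_of_isAlgebraic (hrint.pow d).isAlgebraic]
      exact hβ_in
    rw [Algebra.adjoin_singleton_eq_range_aeval] at h1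
    exact h1
  -- it suffices to show d = 1
  suffices hdone : d = 1 by
    rw [hdone, mul_one] at hm_ed
    exact (adjoin.finrank hβint).symm.trans (hedef ▸ hm_ed)
  by_contra hdne
  have hd2 : 2 ≤ d := by omega
  -- power reduction
  have hmod : ∀ n : ℕ, r ^ n = ((α ^ (n / m) : ℚ) : ℝ) * r ^ (n % m) := by
    intro n
    conv_lhs => rw [← Nat.div_add_mod n m]
    rw [pow_add, pow_mul, hr]
    push_cast
    ring
  set c : ℕ → ℚ := fun s =>
    ∑ k ∈ (Finset.Icc 1 (m - 1)).filter (fun k => Nat.factorial k % m = s),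
      α ^ (Nat.factorial k / m) with hcdef
  set b : ℕ → ℚ := fun s =>
    ∑ t ∈ (Finset.range (q.natDegree + 1)).filter (fun t => (d * t) % m = s),
      q.coeff t * α ^ ((d * t) / m) with hbdef
  have hβc : ∑ s ∈ Finset.range m, ((c s : ℝ) * r ^ s) = β := by
    rw [hβdef,
      ← Finset.sum_fiberwise_of_maps_to
        (g := fun k => Nat.factorial k % m) (t := Finset.range m)
        (fun k _ => Finset.mem_range.mpr (Nat.mod_lt _ (by omega)))
        (fun k => r ^ Nat.factorial k)]
    refine Finset.sum_congr rfl (fun s _ => ?_)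
    simp only [hcdef]
    push_cast
    rw [Finset.sum_mul]
    refine Finset.sum_congr rfl (fun k hk => ?_)
    obtain ⟨-, hks⟩ := Finset.mem_filter.mp hk
    rw [hmod (Nat.factorial k), hks]
    push_cast
    ring
  have hβb : ∑ s ∈ Finset.range m, ((b s : ℝ) * r ^ s) = β := by
    have hβq : β = ∑ t ∈ Finset.range (q.natDegree + 1),
        ((q.coeff t * α ^ ((d * t) / m) : ℚ) : ℝ) * r ^ ((d * t) % m) := by
      rw [← hq, Polynomial.aeval_eq_sum_range]
      refine Finset.sum_congr rfl (fun t _ => ?_)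
      rw [Rat.smul_def, ← pow_mul, hmod (d * t)]
      push_cast
      try ring
    rw [hβq,
      ← Finset.sum_fiberwise_of_maps_to
        (g := fun t => (d * t) % m) (t := Finset.range m)
        (fun t _ => Finset.mem_range.mpr (Nat.mod_lt _ (by omega)))
        (fun t => ((q.coeff t * α ^ ((d * t) / m) : ℚ) : ℝ) * r ^ ((d * t) % m))]
    refine Finset.sum_congr rfl (fun s _ => ?_)
    simp only [hbdef]
    push_cast
    rw [Finset.sum_mul]
    refine Finset.sum_congr rfl (fun t ht => ?_)
    obtain ⟨-, hts⟩ := Finset.mem_filter.mp ht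
    rw [hts]
    try push_cast
    try ring
  set P : ℚ[X] := ∑ s ∈ Finset.range m, C (c s - b s) * X ^ s with hPdef
  have haevP : (Polynomial.aeval r) P = 0 := by
    rw [hPdef, map_sum]
    have hterm : ∀ s ∈ Finset.range m,
        (Polynomial.aeval r) (C (c s - b s) * X ^ s) = ((c s : ℝ) - (b s : ℝ)) * r ^ s := by
      intro s _
      rw [map_mul, aeval_C, map_pow, aeval_X, eq_ratCast]
      push_cast
      ring
    rw [Finset.sum_congr rfl hterm]
    simp only [sub_mul]
    rw [Finset.sum_sub_distrib, hβc, hβb, sub_self]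
  have hdegP : P.degree < (m : WithBot ℕ) := by
    refine lt_of_le_of_lt (degree_sum_le _ _) ?_
    rw [Finset.sup_lt_iff (by exact WithBot.bot_lt_coe m)]
    intro s hs
    refine lt_of_le_of_lt (degree_C_mul_X_pow_le _ _) ?_
    exact_mod_cast Finset.mem_range.mp hs
  have hP0 : P = 0 := by
    by_contra hne
    have hle := minpoly.degree_le_of_ne_zero ℚ r hne haevP
    rw [degree_eq_natDegree (minpoly.ne_zero hrint), hdeg_r] at hle
    exact absurd (lt_of_le_of_lt hle hdegP) (lt_irrefl _)
  have hco : c 1 - b 1 = 0 := by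
    have h := congrArg (fun p : ℚ[X] => p.coeff 1) hP0
    simp only [hPdef, finset_sum_coeff, coeff_C_mul, coeff_X_pow, coeff_zero] at h
    rw [Finset.sum_congr rfl (fun s _ => by
      rw [mul_ite, mul_one, mul_zero] : ∀ s ∈ Finset.range m,
        (c s - b s) * (if 1 = s then 1 else 0) = if 1 = s then c s - b s else 0)] at h
    rwa [Finset.sum_ite_eq (Finset.range m) 1 (fun s => c s - b s),
      if_pos (Finset.mem_range.mpr (by omega))] at h
  have hb1 : b 1 = 0 := by
    simp only [hbdef]
    have hempty : (Finset.range (q.natDegree + 1)).filter (fun t => (d * t) % m = 1)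
        = ∅ := by
      rw [Finset.filter_eq_empty_iff]
      intro t _
      intro hcontra
      have h1 : d ∣ d * t := Dvd.intro t rfl
      have h2 : d ∣ m := Dvd.intro_left e hm_ed
      have h3 : d ∣ (d * t) % m := by
        have h4 := Nat.div_add_mod (d * t) m
        rw [add_comm] at h4
        have h5 : (d * t) % m = d * t - m * (d * t / m) := eq_tsub_of_add_eq h4
        rw [h5]
        exact Nat.dvd_sub h1 (h2.mul_right _)
      rw [hcontra] at h3
      have := Nat.le_of_dvd one_pos h3
      omega
    rw [hempty, Finset.sum_empty]
  have hc1 : 0 < c 1 := by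
    simp only [hcdef]
    refine Finset.sum_pos (fun k _ => by positivity) ?_
    refine ⟨1, Finset.mem_filter.mpr ⟨Finset.mem_Icc.mpr ⟨le_refl 1, by omega⟩, ?_⟩⟩
    rw [Nat.factorial_one, Nat.mod_eq_of_lt (by omega)]
  rw [hb1] at hco
  linarith


end
end

section
/- Let γ be a complex number and suppose there exist sequences of algebraic numbers β_n of fixed degree m, pairwise distinct, with |γ − β_n| ≤ e^{−w_n·H(β_n)} where w_n → ∞ and H(β_n) → ∞; and suppose there exist c > 0, η > 0 such that |γ − β| ≥ c·e^{−η·H(β)} for every algebraic β of degree < m. Then γ is transcendental. -/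
open Polynomial NumberField IntermediateField
open scoped Classical

noncomputable section


/-- `dᵥ · log⁺ |x|ᵥ` for a finite place `v` of a number field `K`. -/
def finLogPlus {K : Type*} [Field K] [NumberField K]
    (v : IsDedekindDomain.HeightOneSpectrum (𝓞 K)) (x : K) : ℝ :=
  if h : v.valuation K x = 0 then 0
  else max 0 ((Multiplicative.toAdd (WithZero.unzero h) : ℤ) *
    Real.log (Ideal.absNorm v.asIdeal))

/-- The absolute logarithmic Weil height of an element of a number field, defined
as `(1/[K:ℚ]) Σ_v dᵥ log⁺ |x|ᵥ`, the archimedean part being indexed by the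
embeddings `K →+* ℂ`. -/
def heightK {K : Type*} [Field K] [NumberField K] (x : K) : ℝ :=
  (Module.finrank ℚ K : ℝ)⁻¹ *
    ((∑ σ : K →+* ℂ, max 0 (Real.log (‖σ x‖))) +
      ∑ᶠ v : IsDedekindDomain.HeightOneSpectrum (𝓞 K), finLogPlus v x)

/-- The absolute logarithmic Weil height of a complex algebraic number. -/
def height (α : ℂ) : ℝ :=
  if h : IsAlgebraic ℚ α then
    letI K := IntermediateField.adjoin ℚ ({α} : Set ℂ)
    haveI : FiniteDimensional ℚ K := IntermediateField.adjoin.finiteDimensional h.isIntegral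
    haveI : NumberField K := ⟨⟩
    heightK (⟨α, IntermediateField.mem_adjoin_simple_self ℚ α⟩ : K)
  else 0

namespace TransProof

open IsDedekindDomain IsDedekindDomain.HeightOneSpectrum

variable {K : Type*} [Field K] [NumberField K]

/-- `dᵥ log Nᵥ` (no positive part). -/
def vlog (v : HeightOneSpectrum (𝓞 K)) (x : K) : ℝ :=
  if h : v.valuation K x = 0 then 0
  else (Multiplicative.toAdd (WithZero.unzero h) : ℤ) * Real.log (Ideal.absNorm v.asIdeal)

variable (v : HeightOneSpectrum (𝓞 K))

lemma vlog_zero : vlog v (0 : K) = 0 := by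
  simp [vlog]

lemma finLogPlus_eq (x : K) : finLogPlus v x = max 0 (vlog v x) := by
  unfold finLogPlus vlog
  split_ifs with h
  · simp
  · rfl

lemma finLogPlus_nonneg (x : K) : 0 ≤ finLogPlus v x := by
  rw [finLogPlus_eq]; exact le_max_left _ _

lemma one_le_absNorm : 1 ≤ (Ideal.absNorm v.asIdeal : ℝ) := by
  have h0 : Ideal.absNorm v.asIdeal ≠ 0 := by
    rw [ne_eq, Ideal.absNorm_eq_zero_iff]
    exact v.ne_bot
  exact_mod_cast Nat.one_le_iff_ne_zero.mpr h0

lemma logN_nonneg : 0 ≤ Real.log (Ideal.absNorm v.asIdeal) :=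
  Real.log_nonneg (one_le_absNorm v)

lemma vlog_eq_zero_of_valuation_eq_one {x : K} (h : v.valuation K x = 1) :
    vlog v x = 0 := by
  have h0 : v.valuation K x ≠ 0 := by rw [h]; exact one_ne_zero
  rw [vlog, dif_neg h0]
  have : WithZero.unzero h0 = 1 := by
    rw [← WithZero.coe_inj, WithZero.coe_unzero, h, WithZero.coe_one]
  rw [this]
  simp

lemma vlog_mul {x y : K} (hx : x ≠ 0) (hy : y ≠ 0) :
    vlog v (x * y) = vlog v x + vlog v y := by
  have hvx : v.valuation K x ≠ 0 := (Valuation.ne_zero_iff _).mpr hx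
  have hvy : v.valuation K y ≠ 0 := (Valuation.ne_zero_iff _).mpr hy
  have hvxy : v.valuation K (x * y) ≠ 0 := (Valuation.ne_zero_iff _).mpr (mul_ne_zero hx hy)
  rw [vlog, vlog, vlog, dif_neg hvx, dif_neg hvy, dif_neg hvxy]
  have hu : WithZero.unzero hvxy = WithZero.unzero hvx * WithZero.unzero hvy := by
    rw [← WithZero.coe_inj, WithZero.coe_mul, WithZero.coe_unzero, WithZero.coe_unzero,
      WithZero.coe_unzero, Valuation.map_mul]
  rw [hu, toAdd_mul]
  push_cast
  ring





def cnt (v : HeightOneSpectrum (𝓞 K)) (I : Ideal (𝓞 K)) : ℕ :=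
  (Associates.mk v.asIdeal).count (Associates.mk I).factors



lemma valuation_int {y : 𝓞 K} (hy : y ≠ 0) :
    v.valuation K (algebraMap (𝓞 K) K y)
      = ↑(Multiplicative.ofAdd (-(cnt v (Ideal.span {y}) : ℤ))) := by
  rw [valuation_of_algebraMap, intValuation_apply]
  exact v.intValuationDef_if_neg hy

lemma cnt_eq_zero {y : 𝓞 K} (hy : y ≠ 0) (h : ¬ v.asIdeal ∣ Ideal.span {y}) :
    cnt v (Ideal.span {y}) = 0 := by
  by_contra hc
  exact h ((Associates.count_ne_zero_iff_dvd (by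
    simp [Ideal.zero_eq_bot, Ideal.span_singleton_eq_bot, hy]) v.irreducible).mp hc)

lemma valuation_int_eq_one {y : 𝓞 K} (hy : y ≠ 0) (h : ¬ v.asIdeal ∣ Ideal.span {y}) :
    v.valuation K (algebraMap (𝓞 K) K y) = 1 := by
  rw [valuation_int v hy, cnt_eq_zero v hy h]
  simp








lemma vlog_int {y : 𝓞 K} (hy : y ≠ 0) :
    vlog v (algebraMap (𝓞 K) K y)
      = -(cnt v (Ideal.span {y}) : ℝ) * Real.log (Ideal.absNorm v.asIdeal) := by
  have h0 : v.valuation K (algebraMap (𝓞 K) K y) ≠ 0 := by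
    rw [valuation_int v hy]; exact WithZero.coe_ne_zero
  rw [vlog, dif_neg h0]
  have hu : WithZero.unzero h0 = Multiplicative.ofAdd (-(cnt v (Ideal.span {y}) : ℤ)) := by
    rw [← WithZero.coe_inj, WithZero.coe_unzero, valuation_int v hy]
  rw [hu, toAdd_ofAdd]
  push_cast
  ring

lemma span_ne_zero {y : 𝓞 K} (hy : y ≠ 0) : (Ideal.span {y} : Ideal (𝓞 K)) ≠ 0 := by
  simp [Ideal.zero_eq_bot, Ideal.span_singleton_eq_bot, hy]

lemma support_vlog_int {y : 𝓞 K} (hy : y ≠ 0) :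
    (Function.support fun v : HeightOneSpectrum (𝓞 K) =>
      vlog v (algebraMap (𝓞 K) K y)) ⊆ {v | v.asIdeal ∣ Ideal.span {y}} := by
  intro v hv
  by_contra h
  exact hv (vlog_eq_zero_of_valuation_eq_one v (valuation_int_eq_one v hy h))

lemma finsum_vlog_int {y : 𝓞 K} (hy : y ≠ 0) :
    ∑ᶠ v : HeightOneSpectrum (𝓞 K), vlog v (algebraMap (𝓞 K) K y)
      = -Real.log (Ideal.absNorm (Ideal.span {y})) := by
  have hspan := span_ne_zero hy
  have hfin := Ideal.finite_factors hspan
  set S := hfin.toFinset with hS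
  have hsub : {v : HeightOneSpectrum (𝓞 K) | v.asIdeal ∣ Ideal.span {y}} ⊆ ↑S := by
    intro v hv; simpa [hS] using hv
  -- factorization of the ideal as a finset product
  have hfact : Ideal.span {y} = ∏ v ∈ S, v.asIdeal ^ cnt v (Ideal.span {y}) := by
    conv_lhs => rw [← Ideal.finprod_heightOneSpectrum_factorization hspan]
    refine finprod_eq_prod_of_mulSupport_subset _ ?_
    intro v hv
    apply hsub
    by_contra h
    apply hv
    simp only [maxPowDividing]
    rw [show (Associates.mk v.asIdeal).count (Associates.mk (Ideal.span {y})).factors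
      = cnt v (Ideal.span {y}) from rfl, cnt_eq_zero v hy h, pow_zero]
  have habs : (Ideal.absNorm (Ideal.span {y}) : ℝ)
      = ∏ v ∈ S, (Ideal.absNorm v.asIdeal : ℝ) ^ cnt v (Ideal.span {y}) := by
    conv_lhs => rw [hfact]
    rw [map_prod]
    push_cast
    refine Finset.prod_congr rfl fun v _ => ?_
    rw [map_pow]
    push_cast
    rfl
  have hlog : Real.log (Ideal.absNorm (Ideal.span {y}))
      = ∑ v ∈ S, (cnt v (Ideal.span {y}) : ℝ) * Real.log (Ideal.absNorm v.asIdeal) := by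
    rw [habs, Real.log_prod]
    · refine Finset.sum_congr rfl fun v _ => ?_
      rw [Real.log_pow]
    · intro v _
      have := one_le_absNorm (K := K) v
      positivity
  rw [hlog, finsum_eq_sum_of_support_subset _ (Set.Subset.trans (support_vlog_int hy) hsub),
    ← Finset.sum_neg_distrib]
  refine Finset.sum_congr rfl fun v _ => ?_
  rw [vlog_int v hy]
  ring

lemma support_vlog_finite (x : K) :
    (Function.support fun v : HeightOneSpectrum (𝓞 K) => vlog v x).Finite := by
  rcases eq_or_ne x 0 with rfl | hx
  · simp only [vlog]
    convert Set.finite_empty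
    ext v
    simp [Valuation.map_zero]
  · obtain ⟨a, b, hb, hab⟩ := IsFractionRing.div_surjective (A := 𝓞 K) x
    have hb0 : b ≠ 0 := nonZeroDivisors.ne_zero hb
    have ha0 : a ≠ 0 := by
      rintro rfl
      simp at hab
      exact hx hab.symm
    refine Set.Finite.subset ((Ideal.finite_factors (span_ne_zero ha0)).union
      (Ideal.finite_factors (span_ne_zero hb0))) ?_
    intro v hv
    by_contra h
    simp only [Set.mem_union, Set.mem_setOf_eq] at h
    push_neg at h
    apply hv
    apply vlog_eq_zero_of_valuation_eq_one
    rw [← hab, map_div₀, valuation_int_eq_one v ha0 h.1, valuation_int_eq_one v hb0 h.2,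
      div_one]




/-- archimedean sum -/
def asum (x : K) : ℝ := ∑ σ : K →+* ℂ, Real.log (‖σ x‖)

lemma prod_abs_embeddings (x : K) :
    ∏ σ : K →+* ℂ, ‖σ x‖ = |((Algebra.norm ℚ x : ℚ) : ℝ)| := by
  have h := Algebra.norm_eq_prod_embeddings ℚ ℂ x
  have h2 := congrArg (‖·‖) h
  rw [norm_prod] at h2
  have e : ∏ σ : K →+* ℂ, ‖σ x‖ = ∏ φ : K →ₐ[ℚ] ℂ, ‖φ x‖ :=
    Fintype.prod_equiv (RingHom.equivRatAlgHom K ℂ) _ _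
      (fun σ => by simp [RingHom.equivRatAlgHom_apply])
  rw [e, ← h2, eq_ratCast, ← Complex.ofReal_ratCast, Complex.norm_real, Real.norm_eq_abs]

lemma asum_eq (x : K) (hx : x ≠ 0) :
    asum x = Real.log |((Algebra.norm ℚ x : ℚ) : ℝ)| := by
  rw [asum, ← prod_abs_embeddings, Real.log_prod]
  intro σ _
  simp only [ne_eq, norm_eq_zero, _root_.map_eq_zero]
  exact hx

lemma asum_mul {x y : K} (hx : x ≠ 0) (hy : y ≠ 0) :
    asum (x * y) = asum x + asum y := by
  rw [asum, asum, asum, ← Finset.sum_add_distrib]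
  refine Finset.sum_congr rfl fun σ _ => ?_
  rw [map_mul, norm_mul, Real.log_mul]
  · simpa using fun h => hx h
  · simpa using fun h => hy h

lemma pf_int {y : 𝓞 K} (hy : y ≠ 0) :
    asum (algebraMap (𝓞 K) K y) + ∑ᶠ v : HeightOneSpectrum (𝓞 K),
      vlog v (algebraMap (𝓞 K) K y) = 0 := by
  have hy' : algebraMap (𝓞 K) K y ≠ 0 := by
    simpa using hy
  have key : |((Algebra.norm ℚ (algebraMap (𝓞 K) K y) : ℚ) : ℝ)|
      = ((Ideal.absNorm (Ideal.span {y}) : ℕ) : ℝ) := by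
    rw [show algebraMap (𝓞 K) K y = (y : K) from rfl, ← Algebra.coe_norm_int,
      Ideal.absNorm_span_singleton, Nat.cast_natAbs]
    push_cast
    rfl
  rw [asum_eq _ hy', finsum_vlog_int hy, key]
  ring

theorem product_formula {x : K} (hx : x ≠ 0) :
    asum x + ∑ᶠ v : HeightOneSpectrum (𝓞 K), vlog v x = 0 := by
  obtain ⟨a, b, hb, hab⟩ := IsFractionRing.div_surjective (A := 𝓞 K) x
  have hb0 : b ≠ 0 := nonZeroDivisors.ne_zero hb
  have hb' : algebraMap (𝓞 K) K b ≠ 0 := by simpa using hb0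
  have ha' : algebraMap (𝓞 K) K a ≠ 0 := by
    intro h
    rw [← hab, h, zero_div] at hx
    exact hx rfl
  have ha0 : a ≠ 0 := by simpa using ha'
  have hmul : x * algebraMap (𝓞 K) K b = algebraMap (𝓞 K) K a := by
    rw [← hab, div_mul_cancel₀ _ hb']
  have hA : asum x + asum (algebraMap (𝓞 K) K b) = asum (algebraMap (𝓞 K) K a) := by
    rw [← asum_mul hx hb', hmul]
  have hB : (∑ᶠ v : HeightOneSpectrum (𝓞 K), vlog v x)
      + ∑ᶠ v : HeightOneSpectrum (𝓞 K), vlog v (algebraMap (𝓞 K) K b)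
      = ∑ᶠ v : HeightOneSpectrum (𝓞 K), vlog v (algebraMap (𝓞 K) K a) := by
    rw [← finsum_add_distrib (support_vlog_finite x) (support_vlog_finite _)]
    rw [← hmul]
    exact finsum_congr fun v => (vlog_mul v hx hb').symm
  have h1 := pf_int (K := K) ha0
  have h2 := pf_int (K := K) hb0
  linarith [hA, hB, h1, h2]






lemma support_finLogPlus_subset (x : K) :
    (Function.support fun v : HeightOneSpectrum (𝓞 K) => finLogPlus v x)
      ⊆ Function.support fun v => vlog v x := by
  intro v hv
  simp only [Function.mem_support, ne_eq] at hv ⊢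
  intro h
  exact hv (by rw [finLogPlus_eq, h]; simp)

lemma support_finLogPlus_finite (x : K) :
    (Function.support fun v : HeightOneSpectrum (𝓞 K) => finLogPlus v x).Finite :=
  (support_vlog_finite x).subset (support_finLogPlus_subset x)

lemma heightK_nonneg (x : K) : 0 ≤ heightK x := by
  apply mul_nonneg
  · positivity
  · apply add_nonneg
    · exact Finset.sum_nonneg fun σ _ => le_max_left _ _
    · exact finsum_nonneg fun v => finLogPlus_nonneg v x

lemma finsum_vlog_le (x : K) :
    (∑ᶠ v : HeightOneSpectrum (𝓞 K), vlog v x)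
      ≤ ∑ᶠ v : HeightOneSpectrum (𝓞 K), finLogPlus v x := by
  have hfin := support_vlog_finite x
  set S := hfin.toFinset
  rw [finsum_eq_sum_of_support_subset (fun v => vlog v x) (show Function.support (fun v => vlog v x) ⊆ (S : Set _) by
      intro v hv; simpa [S] using hv),
    finsum_eq_sum_of_support_subset (fun v => finLogPlus v x) (show Function.support (fun v => finLogPlus v x) ⊆ (S : Set _) by
      intro v hv
      have := support_finLogPlus_subset x hv
      simpa [S] using this)]
  refine Finset.sum_le_sum fun v _ => ?_
  rw [finLogPlus_eq]
  exact le_max_right _ _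

theorem embedding_lower_bound {x : K} (hx : x ≠ 0) (σ₀ : K →+* ℂ) :
    Real.exp (-(Module.finrank ℚ K : ℝ) * heightK x) ≤ ‖σ₀ x‖ := by
  have hσx : σ₀ x ≠ 0 := fun h => hx ((_root_.map_eq_zero σ₀).mp h)
  have hσ0 : 0 < ‖σ₀ x‖ := by
    simpa [norm_pos_iff] using hσx
  rw [← Real.exp_log hσ0]
  apply Real.exp_le_exp.mpr
  have hD : (Module.finrank ℚ K : ℝ) ≠ 0 := by
    have : 0 < Module.finrank ℚ K := Module.finrank_pos
    exact_mod_cast this.ne'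
  have hDh : (Module.finrank ℚ K : ℝ) * heightK x
      = (∑ σ : K →+* ℂ, max 0 (Real.log (‖σ x‖)))
        + ∑ᶠ v : HeightOneSpectrum (𝓞 K), finLogPlus v x := by
    rw [heightK, ← mul_assoc, mul_inv_cancel₀ hD, one_mul]
  have e3 := product_formula hx
  have e1 := finsum_vlog_le x
  have e5 : ∑ σ : K →+* ℂ, (max 0 (Real.log (‖σ x‖))
      - Real.log (‖σ x‖))
      = (∑ σ : K →+* ℂ, max 0 (Real.log (‖σ x‖))) - asum x := by
    rw [Finset.sum_sub_distrib]; rfl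
  have e4 : max 0 (Real.log (‖σ₀ x‖)) - Real.log (‖σ₀ x‖)
      ≤ ∑ σ : K →+* ℂ, (max 0 (Real.log (‖σ x‖))
        - Real.log (‖σ x‖)) := by
    refine Finset.single_le_sum
      (f := fun σ : K →+* ℂ => max 0 (Real.log (‖σ x‖))
        - Real.log (‖σ x‖))
      (fun σ _ => sub_nonneg.mpr (le_max_right _ _)) (Finset.mem_univ σ₀)
  have e6 : (0:ℝ) ≤ max 0 (Real.log (‖σ₀ x‖)) := le_max_left _ _
  rw [neg_mul, hDh]
  linarith [e4, e5, e3, e1, e6]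



lemma finLogPlus_zero (v : HeightOneSpectrum (𝓞 K)) : finLogPlus v (0 : K) = 0 := by
  rw [finLogPlus, dif_pos (Valuation.map_zero _)]

/-- an ultrametric estimate implies the log⁺ estimate -/
lemma finLogPlus_le_of_valuation_le {v : HeightOneSpectrum (𝓞 K)} {z x : K} {d : ℕ}
    (hval : v.valuation K z ≤ max 1 (v.valuation K x) ^ d) :
    finLogPlus v z ≤ d * finLogPlus v x := by
  rcases eq_or_ne z 0 with rfl | hz
  · rw [finLogPlus_zero]
    exact mul_nonneg (Nat.cast_nonneg d) (finLogPlus_nonneg v x)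
  have hvz : v.valuation K z ≠ 0 := (Valuation.ne_zero_iff _).mpr hz
  by_cases hx1 : v.valuation K x ≤ 1
  · -- then v z ≤ 1 and lhs = 0
    have h1 : v.valuation K z ≤ 1 := by
      calc v.valuation K z ≤ max 1 (v.valuation K x) ^ d := hval
      _ = 1 := by rw [max_eq_left hx1, one_pow]
    have htz : (Multiplicative.toAdd (WithZero.unzero hvz) : ℤ) ≤ 0 := by
      have : (WithZero.unzero hvz : Multiplicative ℤ) ≤ 1 := by
        rw [← WithZero.coe_le_coe, WithZero.coe_unzero, WithZero.coe_one]
        exact h1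
      exact this
    rw [finLogPlus, dif_neg hvz, max_eq_left]
    · exact mul_nonneg (Nat.cast_nonneg d) (finLogPlus_nonneg v x)
    · exact mul_nonpos_of_nonpos_of_nonneg (by exact_mod_cast htz) (logN_nonneg v)
  · push_neg at hx1
    have hvx : v.valuation K x ≠ 0 := by
      intro h; rw [h] at hx1; exact absurd (le_of_lt hx1) (by simp)
    have hmax : max 1 (v.valuation K x) = v.valuation K x := max_eq_right (le_of_lt hx1)
    rw [hmax] at hval
    have htx : (0:ℤ) < (Multiplicative.toAdd (WithZero.unzero hvx) : ℤ) := by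
      have : (1 : Multiplicative ℤ) < WithZero.unzero hvx := by
        rw [← WithZero.coe_lt_coe, WithZero.coe_unzero, WithZero.coe_one]
        exact hx1
      exact this
    have htz : (Multiplicative.toAdd (WithZero.unzero hvz) : ℤ)
        ≤ d * (Multiplicative.toAdd (WithZero.unzero hvx) : ℤ) := by
      have hpow : v.valuation K x ^ d = ((WithZero.unzero hvx ^ d : Multiplicative ℤ) : WithZero (Multiplicative ℤ)) := by
        rw [WithZero.coe_pow, WithZero.coe_unzero]
      rw [hpow] at hval
      have : (WithZero.unzero hvz : Multiplicative ℤ) ≤ WithZero.unzero hvx ^ d := by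
        rw [← WithZero.coe_le_coe, WithZero.coe_unzero]
        exact hval
      have h2 : Multiplicative.toAdd (WithZero.unzero hvz)
          ≤ Multiplicative.toAdd (WithZero.unzero hvx ^ d) := this
      simpa using h2
    rw [finLogPlus, finLogPlus, dif_neg hvz, dif_neg hvx]
    have hN := logN_nonneg v
    have hterm : (0:ℝ) ≤ (Multiplicative.toAdd (WithZero.unzero hvx) : ℤ) *
        Real.log (Ideal.absNorm v.asIdeal) :=
      mul_nonneg (by exact_mod_cast htx.le) hN
    rw [max_eq_right hterm]
    calc max 0 ((Multiplicative.toAdd (WithZero.unzero hvz) : ℤ) *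
          Real.log (Ideal.absNorm v.asIdeal))
        ≤ max 0 ((d * (Multiplicative.toAdd (WithZero.unzero hvx) : ℤ) : ℤ) *
          Real.log (Ideal.absNorm v.asIdeal)) := by
          apply max_le_max le_rfl
          apply mul_le_mul_of_nonneg_right _ hN
          exact_mod_cast htz
      _ = (d : ℝ) * ((Multiplicative.toAdd (WithZero.unzero hvx) : ℤ) *
          Real.log (Ideal.absNorm v.asIdeal)) := by
          rw [max_eq_right]
          · push_cast; ring
          · have : ((d * Multiplicative.toAdd (WithZero.unzero hvx) : ℤ) : ℝ)
                = (d : ℝ) * ((Multiplicative.toAdd (WithZero.unzero hvx) : ℤ) : ℝ) := by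
              push_cast; ring
            rw [this]
            exact mul_nonneg (mul_nonneg (Nat.cast_nonneg d) (by exact_mod_cast htx.le)) hN

lemma valuation_poly_le (v : HeightOneSpectrum (𝓞 K)) (x : K) (d : ℕ) (c : ℕ → ℤ) :
    v.valuation K (∑ i ∈ Finset.range (d+1), (c i : K) * x ^ i)
      ≤ max 1 (v.valuation K x) ^ d := by
  apply Valuation.map_sum_le
  intro i hi
  rw [Finset.mem_range, Nat.lt_succ_iff] at hi
  rw [Valuation.map_mul, Valuation.map_pow]
  have hc : v.valuation K ((c i : K)) ≤ 1 := by
    have := v.valuation_le_one (K := K) ((c i : ℤ) : 𝓞 K)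
    exact_mod_cast this
  calc v.valuation K (c i : K) * v.valuation K x ^ i
      ≤ 1 * max 1 (v.valuation K x) ^ i := by
        apply mul_le_mul' hc
        exact pow_le_pow_left' (le_max_right _ _) i
    _ ≤ 1 * max 1 (v.valuation K x) ^ d := by
        apply mul_le_mul' le_rfl
        exact pow_le_pow_right' (le_max_left _ _) hi
    _ = max 1 (v.valuation K x) ^ d := one_mul _



lemma finsum_mono {ι : Type*} {f g : ι → ℝ} (h : ∀ i, f i ≤ g i)
    (hf : (Function.support f).Finite) (hg : (Function.support g).Finite) :
    ∑ᶠ i, f i ≤ ∑ᶠ i, g i := by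
  classical
  set S := (hf.union hg).toFinset
  rw [finsum_eq_sum_of_support_subset f (show _ ⊆ (S : Set ι) by
      intro i hi; simp [S]; exact Or.inl hi),
    finsum_eq_sum_of_support_subset g (show _ ⊆ (S : Set ι) by
      intro i hi; simp [S]; exact Or.inr hi)]
  exact Finset.sum_le_sum fun i _ => h i

lemma maxlog (u : ℝ) (hu : 0 ≤ u) : max 0 (Real.log u) = Real.log (max 1 u) := by
  rcases le_or_gt u 1 with h | h
  · rw [max_eq_left (Real.log_nonpos hu h), max_eq_left h, Real.log_one]
  · rw [max_eq_right (Real.log_nonneg h.le), max_eq_right h.le]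



lemma finLogPlus_poly_le {K : Type*} [Field K] [NumberField K]
    (v : HeightOneSpectrum (𝓞 K)) (x : K) (d : ℕ) (c : ℕ → ℤ) :
    finLogPlus v (∑ i ∈ Finset.range (d+1), (c i : K) * x ^ i) ≤ d * finLogPlus v x :=
  finLogPlus_le_of_valuation_le (valuation_poly_le v x d c)

lemma arch_poly_le {K : Type*} [Field K] [NumberField K] (σ : K →+* ℂ) (x : K) (d : ℕ) (c : ℕ → ℤ) :
    max 0 (Real.log (‖σ (∑ i ∈ Finset.range (d+1), (c i : K) * x ^ i)‖))
      ≤ Real.log ((∑ i ∈ Finset.range (d+1), |(c i : ℝ)|) + 1)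
        + d * max 0 (Real.log (‖σ x‖)) := by
  set B : ℝ := (∑ i ∈ Finset.range (d+1), |(c i : ℝ)|) + 1 with hB
  have hB1 : 1 ≤ B := by
    have : 0 ≤ ∑ i ∈ Finset.range (d+1), |(c i : ℝ)| :=
      Finset.sum_nonneg fun i _ => abs_nonneg _
    linarith
  set M : ℝ := max 1 (‖σ x‖) with hM
  have hM1 : 1 ≤ M := le_max_left _ _
  have habs : ‖σ (∑ i ∈ Finset.range (d+1), (c i : K) * x ^ i)‖ ≤ B * M ^ d := by
    rw [map_sum]
    refine le_trans (norm_sum_le _ _) ?_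
    have hterm : ∀ i ∈ Finset.range (d+1),
        ‖σ ((c i : K) * x ^ i)‖ ≤ |(c i : ℝ)| * M ^ d := by
      intro i hi
      rw [Finset.mem_range, Nat.lt_succ_iff] at hi
      rw [map_mul, map_pow, norm_mul, norm_pow, map_intCast]
      rw [show ‖(c i : ℂ)‖ = |(c i : ℝ)| from Complex.norm_intCast (c i)]
      apply mul_le_mul_of_nonneg_left _ (abs_nonneg _)
      calc ‖σ x‖ ^ i ≤ M ^ i :=
            pow_le_pow_left₀ (norm_nonneg _) (le_max_right _ _) i
        _ ≤ M ^ d := pow_le_pow_right₀ hM1 hi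
    refine le_trans (Finset.sum_le_sum hterm) ?_
    rw [← Finset.sum_mul]
    apply mul_le_mul_of_nonneg_right _ (by positivity)
    rw [hB]
    linarith
  have hnn : (0:ℝ) ≤ ‖σ (∑ i ∈ Finset.range (d+1), (c i : K) * x ^ i)‖ :=
    norm_nonneg _
  rw [maxlog _ hnn, maxlog _ (norm_nonneg _)]
  have hle : max 1 (‖σ (∑ i ∈ Finset.range (d+1), (c i : K) * x ^ i)‖)
      ≤ B * M ^ d := by
    apply max_le _ habs
    have : (1:ℝ) ≤ M ^ d := one_le_pow₀ hM1
    nlinarith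
  calc Real.log (max 1 (‖σ (∑ i ∈ Finset.range (d+1), (c i : K) * x ^ i)‖))
      ≤ Real.log (B * M ^ d) := Real.log_le_log (by positivity) hle
    _ = Real.log B + d * Real.log M := by
        rw [Real.log_mul (by positivity) (by positivity), Real.log_pow]
  
theorem heightK_poly_le (x : K) (d : ℕ) (c : ℕ → ℤ) :
    heightK (∑ i ∈ Finset.range (d+1), (c i : K) * x ^ i)
      ≤ d * heightK x + Real.log ((∑ i ∈ Finset.range (d+1), |(c i : ℝ)|) + 1) := by
  set z := ∑ i ∈ Finset.range (d+1), (c i : K) * x ^ i with hz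
  set B : ℝ := (∑ i ∈ Finset.range (d+1), |(c i : ℝ)|) + 1 with hB
  have hB1 : 1 ≤ B := by
    have : 0 ≤ ∑ i ∈ Finset.range (d+1), |(c i : ℝ)| :=
      Finset.sum_nonneg fun i _ => abs_nonneg _
    linarith
  have hD : (0:ℝ) < (Module.finrank ℚ K : ℝ) := by
    exact_mod_cast Module.finrank_pos (R := ℚ) (M := K)
  have hfin : (∑ᶠ v : HeightOneSpectrum (𝓞 K), finLogPlus v z)
      ≤ d * ∑ᶠ v : HeightOneSpectrum (𝓞 K), finLogPlus v x := by
    have h1 : (∑ᶠ v : HeightOneSpectrum (𝓞 K), finLogPlus v z)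
        ≤ ∑ᶠ v : HeightOneSpectrum (𝓞 K), (d : ℝ) * finLogPlus v x := by
      apply finsum_mono (fun v => finLogPlus_poly_le v x d c)
        (support_finLogPlus_finite z)
      apply Set.Finite.subset (support_finLogPlus_finite x)
      intro v hv
      simp only [Function.mem_support, ne_eq] at hv ⊢
      intro h
      exact hv (by rw [h, mul_zero])
    rwa [← mul_finsum' _ _ (support_finLogPlus_finite x)] at h1
  have harch : (∑ σ : K →+* ℂ, max 0 (Real.log (‖σ z‖)))
      ≤ (Module.finrank ℚ K : ℝ) * Real.log B
        + d * ∑ σ : K →+* ℂ, max 0 (Real.log (‖σ x‖)) := by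
    calc (∑ σ : K →+* ℂ, max 0 (Real.log (‖σ z‖)))
        ≤ ∑ σ : K →+* ℂ, (Real.log B + d * max 0 (Real.log (‖σ x‖))) :=
          Finset.sum_le_sum fun σ _ => arch_poly_le σ x d c
      _ = (Fintype.card (K →+* ℂ) : ℝ) * Real.log B
          + d * ∑ σ : K →+* ℂ, max 0 (Real.log (‖σ x‖)) := by
          rw [Finset.sum_add_distrib, Finset.sum_const, ← Finset.mul_sum]
          simp [nsmul_eq_mul]
      _ = (Module.finrank ℚ K : ℝ) * Real.log B
          + d * ∑ σ : K →+* ℂ, max 0 (Real.log (‖σ x‖)) := by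
          rw [NumberField.Embeddings.card K ℂ]
  rw [heightK, heightK]
  rw [inv_mul_le_iff₀ hD]
  calc (∑ σ : K →+* ℂ, max 0 (Real.log (‖σ z‖)))
      + ∑ᶠ v : HeightOneSpectrum (𝓞 K), finLogPlus v z
      ≤ ((Module.finrank ℚ K : ℝ) * Real.log B
        + d * ∑ σ : K →+* ℂ, max 0 (Real.log (‖σ x‖)))
        + d * ∑ᶠ v : HeightOneSpectrum (𝓞 K), finLogPlus v x := add_le_add harch hfin
    _ = (Module.finrank ℚ K : ℝ) *
        (d * ((Module.finrank ℚ K : ℝ)⁻¹ *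
          ((∑ σ : K →+* ℂ, max 0 (Real.log (‖σ x‖))) +
            ∑ᶠ v : HeightOneSpectrum (𝓞 K), finLogPlus v x)) + Real.log B) := by
        field_simp
        ring


lemma lipschitz_poly (P : ℚ[X]) (γ : ℂ) :
    ∃ L : ℝ, 1 ≤ L ∧ ∀ z : ℂ, ‖z - γ‖ ≤ 1 →
      ‖aeval z P - aeval γ P‖ ≤ L * ‖z - γ‖ := by
  set Q := P.map (algebraMap ℚ ℂ) with hQ
  have haeval : ∀ z : ℂ, aeval z P = Q.eval z := fun z => by
    rw [hQ, eval_map, aeval_def]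
  have hcont : ContinuousOn (fun z : ℂ => Q.derivative.eval z)
      (Metric.closedBall γ 1) := (Polynomial.continuous _).continuousOn
  obtain ⟨C, hC⟩ := (isCompact_closedBall γ 1).exists_bound_of_continuousOn hcont
  refine ⟨max C 1, le_max_right _ _, fun z hz => ?_⟩
  have hzball : z ∈ Metric.closedBall γ 1 := by
    rw [Metric.mem_closedBall, dist_eq_norm] at *
    simpa using hz
  have hγball : γ ∈ Metric.closedBall γ 1 := Metric.mem_closedBall_self zero_le_one
  have key := Convex.norm_image_sub_le_of_norm_hasDerivWithin_le
    (C := max C 1)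
    (f := fun z : ℂ => Q.eval z) (f' := fun z : ℂ => Q.derivative.eval z)
    (s := Metric.closedBall γ 1)
    (fun x _ => (Polynomial.hasDerivAt Q x).hasDerivWithinAt)
    (fun x hx => le_trans (hC x hx) (le_max_left _ _))
    (convex_closedBall γ 1) hγball hzball
  rw [haeval z, haeval γ]
  simpa using key

lemma rat_clear_denom (q : ℚ) (n : ℕ) (h : q.den ∣ n) :
    (((q * n).num : ℤ) : ℚ) = q * n := by
  have : (q * (n:ℚ)) = (((q.num * (n / q.den : ℕ) : ℤ)) : ℚ) := by
    conv_lhs => rw [← Rat.num_div_den q]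
    push_cast [Nat.cast_div_charZero h]
    field_simp
    rw [Int.cast_div (Int.natCast_dvd_natCast.mpr h) (by simp)]
    push_cast
    field_simp
  rw [this, Rat.num_intCast]



lemma height_eq (α : ℂ) (h : IsAlgebraic ℚ α) :
    letI K := IntermediateField.adjoin ℚ ({α} : Set ℂ)
    haveI : FiniteDimensional ℚ K := IntermediateField.adjoin.finiteDimensional h.isIntegral
    haveI : NumberField K := ⟨⟩
    height α = heightK (⟨α, IntermediateField.mem_adjoin_simple_self ℚ α⟩ : K) := by
  unfold height
  rw [dif_pos h]

lemma height_nonneg (α : ℂ) : 0 ≤ height α := by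
  by_cases h : IsAlgebraic ℚ α
  · letI K := IntermediateField.adjoin ℚ ({α} : Set ℂ)
    haveI : FiniteDimensional ℚ K := IntermediateField.adjoin.finiteDimensional h.isIntegral
    haveI : NumberField K := ⟨⟩
    rw [height_eq α h]
    exact heightK_nonneg _
  · unfold height
    rw [dif_neg h]

theorem aeval_lower_bound (P : ℚ[X]) :
    ∃ N B : ℝ, 1 ≤ N ∧ 1 ≤ B ∧ ∀ α : ℂ, IsAlgebraic ℚ α → aeval α P ≠ 0 →
      Real.exp (-((minpoly ℚ α).natDegree : ℝ) *
        ((P.natDegree : ℝ) * height α + Real.log B)) / N ≤ ‖aeval α P‖ := by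
  classical
  set d := P.natDegree with hd
  set N₀ : ℕ := ∏ i ∈ P.support, (P.coeff i).den with hN₀def
  have hN₀ : 0 < N₀ := Finset.prod_pos fun i _ => (P.coeff i).pos
  have hden : ∀ i, (P.coeff i).den ∣ N₀ := by
    intro i
    by_cases hi : i ∈ P.support
    · exact Finset.dvd_prod_of_mem _ hi
    · rw [Polynomial.notMem_support_iff.mp hi]
      simp
  set c : ℕ → ℤ := fun i => (P.coeff i * N₀).num with hcdef
  have hc : ∀ i, ((c i : ℤ) : ℚ) = P.coeff i * N₀ := fun i =>
    rat_clear_denom _ _ (hden i)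
  set B : ℝ := (∑ i ∈ Finset.range (d+1), |(c i : ℝ)|) + 1 with hBdef
  have hB1 : 1 ≤ B := by
    have : 0 ≤ ∑ i ∈ Finset.range (d+1), |(c i : ℝ)| :=
      Finset.sum_nonneg fun i _ => abs_nonneg _
    linarith
  refine ⟨N₀, B, by exact_mod_cast hN₀, hB1, ?_⟩
  intro α halg hroot
  letI K := IntermediateField.adjoin ℚ ({α} : Set ℂ)
  haveI : FiniteDimensional ℚ K := IntermediateField.adjoin.finiteDimensional halg.isIntegral
  haveI : NumberField K := ⟨⟩
  set xK : K := ⟨α, IntermediateField.mem_adjoin_simple_self ℚ α⟩ with hxK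
  set σ₀ : K →+* ℂ := K.val.toRingHom with hσ₀
  have hσx : σ₀ xK = α := rfl
  set z : K := ∑ i ∈ Finset.range (d+1), (c i : K) * xK ^ i with hzdef
  have hσz : σ₀ z = (N₀ : ℂ) * aeval α P := by
    rw [hzdef, map_sum]
    have hae : aeval α P = ∑ i ∈ Finset.range (d+1), P.coeff i • α ^ i :=
      aeval_eq_sum_range' (by omega) α
    rw [hae, Finset.mul_sum, ← Finset.sum_congr rfl]
    intro i _
    rw [map_mul, map_pow, map_intCast, hσx]
    have : ((c i : ℂ)) = (N₀ : ℂ) * ((P.coeff i : ℚ) : ℂ) := by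
      have h2 := congrArg (fun q : ℚ => (q : ℂ)) (hc i)
      push_cast at h2 ⊢
      rw [h2]; ring
    rw [this, Rat.smul_def]
    ring
  have hz0 : z ≠ 0 := by
    intro h0
    apply hroot
    have : σ₀ z = 0 := by rw [h0, map_zero]
    rw [hσz] at this
    have hN0 : (N₀ : ℂ) ≠ 0 := by exact_mod_cast hN₀.ne'
    exact (mul_eq_zero.mp this).resolve_left hN0
  have hfrk : (Module.finrank ℚ K : ℝ) = ((minpoly ℚ α).natDegree : ℝ) := by
    have h2 : Module.finrank ℚ K = (minpoly ℚ α).natDegree :=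
      IntermediateField.adjoin.finrank halg.isIntegral
    exact_mod_cast h2
  have hh : height α = heightK xK := height_eq α halg
  have hlb := embedding_lower_bound hz0 σ₀
  have hpoly := heightK_poly_le xK d c
  rw [← hzdef] at hpoly
  have hmono : Real.exp (-((minpoly ℚ α).natDegree : ℝ) *
      ((d : ℝ) * height α + Real.log B))
      ≤ Real.exp (-(Module.finrank ℚ K : ℝ) * heightK z) := by
    apply Real.exp_le_exp.mpr
    rw [hfrk, hh]
    have hdeg0 : (0:ℝ) ≤ ((minpoly ℚ α).natDegree : ℝ) := Nat.cast_nonneg _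
    rw [neg_mul, neg_mul, neg_le_neg_iff]
    apply mul_le_mul_of_nonneg_left _ hdeg0
    rw [← hBdef] at hpoly
    exact hpoly
  have habs : ‖σ₀ z‖ = (N₀ : ℝ) * ‖aeval α P‖ := by
    rw [hσz, norm_mul, Complex.norm_natCast]
  rw [div_le_iff₀ (by exact_mod_cast hN₀)]
  calc Real.exp (-((minpoly ℚ α).natDegree : ℝ) * ((d : ℝ) * height α + Real.log B))
      ≤ Real.exp (-(Module.finrank ℚ K : ℝ) * heightK z) := hmono
    _ ≤ ‖σ₀ z‖ := hlb
    _ = (N₀ : ℝ) * ‖aeval α P‖ := habs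
    _ = ‖aeval α P‖ * (N₀ : ℝ) := mul_comm _ _


end TransProof

/-- A complex number admitting very good approximations by infinitely many
distinct algebraic numbers of degree `m`, together with a Liouville-type lower
bound against all algebraic numbers of smaller degree, is transcendental. -/
theorem transcendental_of_approximations (γ : ℂ) (m : ℕ) (β : ℕ → ℂ)
    (halg : ∀ n, IsAlgebraic ℚ (β n)) (hdeg : ∀ n, (minpoly ℚ (β n)).natDegree = m)
    (hinj : Function.Injective β)
    (w : ℕ → ℝ) (hw : Filter.Tendsto w Filter.atTop Filter.atTop)
    (hH : Filter.Tendsto (fun n => height (β n)) Filter.atTop Filter.atTop)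
    (happrox : ∀ n, ‖γ - β n‖ ≤ Real.exp (-(w n) * height (β n)))
    (c η : ℝ) (hc : 0 < c) (hη : 0 < η)
    (hlow : ∀ β' : ℂ, IsAlgebraic ℚ β' → (minpoly ℚ β').natDegree < m →
      ‖γ - β'‖ ≥ c * Real.exp (-η * height β')) :
    Transcendental ℚ γ := by
  intro hγ
  by_cases hcase : (minpoly ℚ γ).natDegree < m
  · have hl := hlow γ hγ hcase
    rw [sub_self, norm_zero] at hl
    have hpos : 0 < c * Real.exp (-η * height γ) := mul_pos hc (Real.exp_pos _)
    linarith
  · push_neg at hcase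
    set P := minpoly ℚ γ with hPdef
    have hPne : P ≠ 0 := minpoly.ne_zero hγ.isIntegral
    obtain ⟨N, B, hN1, hB1, hLB⟩ := TransProof.aeval_lower_bound P
    obtain ⟨L, hL1, hLip⟩ := TransProof.lipschitz_poly P γ
    have hPγ : aeval γ P = 0 := minpoly.aeval ℚ γ
    set d := P.natDegree with hddef
    have hN0 : (0:ℝ) < N := lt_of_lt_of_le one_pos hN1
    have hL0 : (0:ℝ) < L := lt_of_lt_of_le one_pos hL1
    -- eventually, β n is not a root of P
    have hrootfin : {n : ℕ | aeval (β n) P = 0}.Finite := by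
      have hQ : P.map (algebraMap ℚ ℂ) ≠ 0 :=
        (Polynomial.map_ne_zero_iff (algebraMap ℚ ℂ).injective).mpr hPne
      have hfin : {z : ℂ | aeval z P = 0}.Finite := by
        have h1 := Polynomial.finite_setOf_isRoot hQ
        convert h1 using 1
        ext z
        simp only [Set.mem_setOf_eq, IsRoot.def, eval_map, aeval_def]
      exact hfin.preimage hinj.injOn
    have hev5 : ∀ᶠ n in Filter.atTop, aeval (β n) P ≠ 0 := by
      rw [← Nat.cofinite_eq_atTop]
      exact Set.Finite.eventually_cofinite_notMem hrootfin
    have hev1 : ∀ᶠ n in Filter.atTop, (m : ℝ) * d + 1 ≤ w n := hw.eventually_ge_atTop _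
    have hev2 : ∀ᶠ n in Filter.atTop,
        (m:ℝ) * Real.log B + Real.log L + Real.log N + 1 ≤ height (β n) :=
      hH.eventually_ge_atTop _
    have hev3 : ∀ᶠ n in Filter.atTop, 1 ≤ w n := hw.eventually_ge_atTop 1
    have hev4 : ∀ᶠ n in Filter.atTop, 1 ≤ height (β n) := hH.eventually_ge_atTop 1
    obtain ⟨n, hw1, hh2, hw3, hh1, hroot⟩ :=
      (hev1.and (hev2.and (hev3.and (hev4.and hev5)))).exists
    set hgt := height (β n) with hhdef
    have happ := happrox n
    have hsmall : ‖γ - β n‖ ≤ 1 := by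
      refine le_trans happ ?_
      rw [← Real.exp_zero]
      apply Real.exp_le_exp.mpr
      nlinarith
    -- lower bound
    have hlbn := hLB (β n) (halg n) hroot
    rw [hdeg n] at hlbn
    -- upper bound via Lipschitz
    have hup : ‖aeval (β n) P‖ ≤ L * Real.exp (-(w n) * hgt) := by
      have hl2 := hLip (β n) (by rwa [norm_sub_rev] at hsmall)
      rw [hPγ, sub_zero] at hl2
      refine le_trans hl2 (mul_le_mul_of_nonneg_left ?_ (le_of_lt hL0))
      rw [norm_sub_rev]
      exact happ
    have key := le_trans hlbn hup
    rw [div_le_iff₀ hN0] at key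
    have k3 : -(m:ℝ) * ((d:ℝ) * hgt + Real.log B)
        ≤ Real.log L + (-(w n) * hgt) + Real.log N := by
      have k2 : Real.exp (-(m:ℝ) * ((d:ℝ) * hgt + Real.log B))
          ≤ Real.exp (Real.log L + (-(w n) * hgt) + Real.log N) := by
        rw [Real.exp_add, Real.exp_add, Real.exp_log hL0, Real.exp_log hN0]
        calc Real.exp (-(m:ℝ) * ((d:ℝ) * hgt + Real.log B))
            ≤ L * Real.exp (-(w n) * hgt) * N := key
          _ = L * Real.exp (-(w n) * hgt) * N := rfl
      exact Real.exp_le_exp.mp k2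
    -- final contradiction
    have hfin : (w n - (m:ℝ) * d) * hgt ≤ Real.log N + Real.log L + (m:ℝ) * Real.log B := by
      nlinarith
    have hge : hgt ≤ (w n - (m:ℝ) * d) * hgt := by
      nlinarith
    linarith

end
end
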